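/- Let A be a symmetric positive-definite 3×3 real matrix with μ_A > 0 (hyperbolic flow), S := A⁻¹J(A−I), λ := √(μ_A/det A) > 0, and M̃ the associated symbol. Then there exists k₀ ∈ ℝ³ \ {0} with Sᵀk₀ = λ k₀, and for any such k₀ and any a₀ ≠ 0 the amplitude of the corresponding plane-wave solution grows exponentially: for every t ∈ ℝ, |a₀ M̃(t;k₀)| · |e^{−tSᵀ}k₀| = |a₀| |k₀| e^{λt}. In particular the plane-wave solution φ(x,t) = a₀ M̃(t;k₀) e^{−tSᵀ}k₀ e^{2πi (e^{−tSᵀ}k₀)·x} is unbounded in the supremum norm as t → ∞, so the quadratic steady solution P̄(x) = ½ x·Ax is unstable to plane-wave perturbations. -/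

import Mathlib

open Matrix MeasureTheory Real Filter

/-- The Coriolis-type matrix `J`. -/
noncomputable def Jmat : Matrix (Fin 3) (Fin 3) ℝ := !![0, -1, 0; 1, 0, 0; 0, 0, 0]

/-- The matrix `S := A⁻¹ J (A − I)`. -/
noncomputable def Smat (A : Matrix (Fin 3) (Fin 3) ℝ) : Matrix (Fin 3) (Fin 3) ℝ :=
  A⁻¹ * Jmat * (A - 1)

/-- The symbol `m(x) = 2 (x · A⁻¹Jx)/(x · A⁻¹x)`. -/
noncomputable def symb (A : Matrix (Fin 3) (Fin 3) ℝ) (x : Fin 3 → ℝ) : ℝ :=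
  2 * (x ⬝ᵥ (A⁻¹ * Jmat) *ᵥ x) / (x ⬝ᵥ A⁻¹ *ᵥ x)

/-- The symbol `M̃(t;ξ) := exp(∫₀ᵗ m(e^{−rSᵀ}ξ) dr)`. -/
noncomputable def symbM (A : Matrix (Fin 3) (Fin 3) ℝ) (t : ℝ) (ξ : Fin 3 → ℝ) : ℝ :=
  Real.exp (∫ r in (0:ℝ)..t, symb A (NormedSpace.exp ((-r) • (Smat A)ᵀ) *ᵥ ξ))

/-- The Euclidean norm on `ℝ³`. -/
noncomputable def eunorm (v : Fin 3 → ℝ) : ℝ := Real.sqrt (∑ i : Fin 3, v i ^ 2)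

lemma exp_mulVec_eig (M : Matrix (Fin 3) (Fin 3) ℝ) (v : Fin 3 → ℝ) (l : ℝ)
    (h : M *ᵥ v = l • v) :
    NormedSpace.exp M *ᵥ v = Real.exp l • v := by
  letI : SeminormedRing (Matrix (Fin 3) (Fin 3) ℝ) := Matrix.linftyOpSemiNormedRing
  letI : NormedRing (Matrix (Fin 3) (Fin 3) ℝ) := Matrix.linftyOpNormedRing
  letI : NormedAlgebra ℝ (Matrix (Fin 3) (Fin 3) ℝ) := Matrix.linftyOpNormedAlgebra
  have hpow : ∀ n : ℕ, M ^ n *ᵥ v = l ^ n • v := by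
    intro n
    induction n with
    | zero => simp [Matrix.one_mulVec]
    | succ n ih =>
        rw [pow_succ, ← Matrix.mulVec_mulVec, h, Matrix.mulVec_smul, ih, smul_smul,
          pow_succ, mul_comm]
  have hs : Summable fun n : ℕ => (n.factorial : ℝ)⁻¹ • M ^ n :=
    NormedSpace.expSeries_summable' (𝕂 := ℝ) M
  let L : Matrix (Fin 3) (Fin 3) ℝ →ₗ[ℝ] (Fin 3 → ℝ) :=
    { toFun := fun N => N *ᵥ v
      map_add' := fun X Y => Matrix.add_mulVec X Y v
      map_smul' := fun c X => Matrix.smul_mulVec c X v }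
  have hL : Continuous L := L.continuous_of_finiteDimensional
  have hmap : (∑' n : ℕ, (n.factorial : ℝ)⁻¹ • M ^ n) *ᵥ v
      = ∑' n : ℕ, ((n.factorial : ℝ)⁻¹ • M ^ n) *ᵥ v := by
    exact (hs.hasSum.map L hL).tsum_eq.symm
  have hsum2 : Summable fun n : ℕ => (n.factorial : ℝ)⁻¹ * l ^ n := by
    have := Real.summable_pow_div_factorial l
    simpa [div_eq_mul_inv, mul_comm] using this
  rw [NormedSpace.exp_eq_tsum ℝ, hmap]
  have : ∀ n : ℕ, ((n.factorial : ℝ)⁻¹ • M ^ n) *ᵥ v = ((n.factorial : ℝ)⁻¹ * l ^ n) • v := by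
    intro n
    rw [Matrix.smul_mulVec, hpow, smul_smul]
  rw [tsum_congr this, hsum2.tsum_smul_const]
  congr 1
  rw [Real.exp_eq_exp_ℝ, NormedSpace.exp_eq_tsum ℝ]
  exact tsum_congr fun n => by rw [smul_eq_mul]

lemma eunorm_smul (s : ℝ) (v : Fin 3 → ℝ) : eunorm (s • v) = |s| * eunorm v := by
  unfold eunorm
  simp only [Pi.smul_apply, smul_eq_mul, mul_pow, ← Finset.mul_sum]
  rw [Real.sqrt_mul (sq_nonneg s), Real.sqrt_sq_eq_abs]

lemma eunorm_pos {v : Fin 3 → ℝ} (hv : v ≠ 0) : 0 < eunorm v := by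
  unfold eunorm
  apply Real.sqrt_pos.2
  obtain ⟨i, hi⟩ := Function.ne_iff.1 hv
  have h0 : v i ≠ 0 := by simpa using hi
  have h1 : 0 < v i ^ 2 := lt_of_le_of_ne (sq_nonneg _) (Ne.symm (pow_ne_zero 2 h0))
  exact Finset.sum_pos' (fun j _ => sq_nonneg _) ⟨i, Finset.mem_univ i, h1⟩

lemma det_key (a b c d e f lam : ℝ) :
    (Jmat * (!![a,b,c;b,d,e;c,e,f] - 1) - lam • !![(a:ℝ),b,c;b,d,e;c,e,f]).det
      = -(lam^3 * (!![(a:ℝ),b,c;b,d,e;c,e,f]).det)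
        + lam * (a*f - c^2 + d*f - e^2 - f - (!![(a:ℝ),b,c;b,d,e;c,e,f]).det) := by
  simp [Jmat, Matrix.det_fin_three, Matrix.mul_apply, Fin.sum_univ_three, Matrix.sub_apply,
    Matrix.smul_apply, Matrix.one_fin_three]
  ring

lemma Jskew (x y : Fin 3 → ℝ) : x ⬝ᵥ (Jmat *ᵥ y) = -(y ⬝ᵥ (Jmat *ᵥ x)) := by
  simp [Jmat, Matrix.mulVec, dotProduct, Fin.sum_univ_three, Matrix.vecHead,
    Matrix.vecTail, Function.comp]
  ring

/-- in the hyperbolic case `μ_A > 0`, with `λ := √(μ_A/det A) > 0`, `Sᵀ` has a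
real eigenvector `k₀ ≠ 0` with eigenvalue `λ`, and for any such `k₀` and any `a₀ ≠ 0` the
plane-wave amplitude grows exponentially:
`|a₀ M̃(t;k₀)|·|e^{−tSᵀ}k₀| = |a₀||k₀|e^{λt}`; in particular the plane-wave solution is
unbounded in supremum norm as `t → ∞`, so `P̄(x) = ½x·Ax` is unstable. -/
theorem hyperbolic_instability (a b c d e f : ℝ) (A : Matrix (Fin 3) (Fin 3) ℝ)
    (hA : A = !![a, b, c; b, d, e; c, e, f]) (hApd : A.PosDef)
    (μ : ℝ) (hμ : μ = a * f - c ^ 2 + d * f - e ^ 2 - f - A.det) (hμpos : 0 < μ)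
    (lam : ℝ) (hlam : lam = Real.sqrt (μ / A.det)) :
    0 < lam ∧
    (∃ k₀ : Fin 3 → ℝ, k₀ ≠ 0 ∧ (Smat A)ᵀ *ᵥ k₀ = lam • k₀) ∧
    ∀ k₀ : Fin 3 → ℝ, k₀ ≠ 0 → (Smat A)ᵀ *ᵥ k₀ = lam • k₀ →
      ∀ a₀ : ℝ, a₀ ≠ 0 →
        (∀ t : ℝ,
          |a₀ * symbM A t k₀| * eunorm (NormedSpace.exp ((-t) • (Smat A)ᵀ) *ᵥ k₀) =
            |a₀| * eunorm k₀ * Real.exp (lam * t)) ∧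
        Tendsto
          (fun t : ℝ =>
            |a₀ * symbM A t k₀| * eunorm (NormedSpace.exp ((-t) • (Smat A)ᵀ) *ᵥ k₀))
          atTop atTop := by
  have hdetA : 0 < A.det := hApd.det_pos
  have hlampos : 0 < lam := by
    rw [hlam]
    exact Real.sqrt_pos.2 (div_pos hμpos hdetA)
  have hlam2 : lam ^ 2 * A.det = μ := by
    have : lam ^ 2 = μ / A.det := by
      rw [hlam, Real.sq_sqrt (le_of_lt (div_pos hμpos hdetA))]
    rw [this]
    field_simp
  have hunit : IsUnit A.det := isUnit_iff_ne_zero.2 hdetA.ne'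
  have hAinvA : A⁻¹ * A = 1 := Matrix.nonsing_inv_mul A hunit
  have hAAinv : A * A⁻¹ = 1 := Matrix.mul_nonsing_inv A hunit
  -- the characteristic determinant vanishes at lam
  have hfactor : Smat A - lam • 1 = A⁻¹ * (Jmat * (A - 1) - lam • A) := by
    rw [Matrix.mul_sub, Matrix.mul_smul, hAinvA, Smat, Matrix.mul_assoc]
  have hdet1 : (Jmat * (A - 1) - lam • A).det = -(lam^3 * A.det) + lam * μ := by
    rw [hμ, hA]
    exact det_key a b c d e f lam
  have hdetS : (Smat A - lam • 1).det = 0 := by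
    rw [hfactor, Matrix.det_mul, hdet1]
    have h0 : -(lam^3 * A.det) + lam * μ = 0 := by linear_combination (-lam) * hlam2
    rw [h0, mul_zero]
  have hdetST : ((Smat A)ᵀ - lam • 1).det = 0 := by
    have : (Smat A)ᵀ - lam • 1 = (Smat A - lam • 1)ᵀ := by
      rw [Matrix.transpose_sub, Matrix.transpose_smul, Matrix.transpose_one]
    rw [this, Matrix.det_transpose, hdetS]
  -- existence of an eigenvector
  have hexists : ∃ k₀ : Fin 3 → ℝ, k₀ ≠ 0 ∧ (Smat A)ᵀ *ᵥ k₀ = lam • k₀ := by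
    obtain ⟨v, hv0, hv⟩ := (Matrix.exists_mulVec_eq_zero_iff).2 hdetST
    refine ⟨v, hv0, ?_⟩
    have := hv
    rw [Matrix.sub_mulVec, Matrix.smul_mulVec, Matrix.one_mulVec, sub_eq_zero] at this
    exact this
  refine ⟨hlampos, hexists, ?_⟩
  intro k₀ hk0 hk a₀ ha₀
  -- symmetry facts
  have hAT : Aᵀ = A := by
    rw [hA]; ext i j; fin_cases i <;> fin_cases j <;> rfl
  have hAinvT : (A⁻¹)ᵀ = A⁻¹ := by rw [Matrix.transpose_nonsing_inv, hAT]
  have hJT : Jmatᵀ = -Jmat := by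
    ext i j; fin_cases i <;> fin_cases j <;> simp [Jmat, Matrix.neg_apply, Matrix.vecHead, Matrix.vecTail, Function.comp]
  have hST : (Smat A)ᵀ = (A - 1) * (-Jmat * A⁻¹) := by
    rw [Smat, Matrix.transpose_mul, Matrix.transpose_mul, hJT, hAinvT,
      Matrix.transpose_sub, Matrix.transpose_one, hAT]
  set u : Fin 3 → ℝ := A⁻¹ *ᵥ k₀ with hu
  have hu1 : A *ᵥ u = k₀ := by
    rw [hu, Matrix.mulVec_mulVec, hAAinv, Matrix.one_mulVec]
  have hsubT : (A - 1)ᵀ = A - 1 := by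
    rw [Matrix.transpose_sub, Matrix.transpose_one, hAT]
  have hsubmv : (A - 1) *ᵥ u = k₀ - u := by
    rw [Matrix.sub_mulVec, Matrix.one_mulVec, hu1]
  -- dot the eigen equation with u
  have e1 : u ⬝ᵥ ((Smat A)ᵀ *ᵥ k₀) = (k₀ - u) ⬝ᵥ (-(Jmat *ᵥ u)) := by
    rw [hST, ← Matrix.mulVec_mulVec, ← Matrix.mulVec_mulVec, Matrix.neg_mulVec,
      Matrix.dotProduct_mulVec, ← Matrix.mulVec_transpose, hsubT, hsubmv]
  have e2 : (k₀ - u) ⬝ᵥ (-(Jmat *ᵥ u)) = -(k₀ ⬝ᵥ (Jmat *ᵥ u)) := by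
    have hskew : u ⬝ᵥ (Jmat *ᵥ u) = 0 := by
      have := Jskew u u; linarith
    rw [sub_dotProduct, dotProduct_neg, dotProduct_neg]
    rw [hskew]
    ring
  have e3 : u ⬝ᵥ (lam • k₀) = lam * (k₀ ⬝ᵥ u) := by
    rw [dotProduct_smul, smul_eq_mul, dotProduct_comm]
  have hlamD : -(k₀ ⬝ᵥ (Jmat *ᵥ u)) = lam * (k₀ ⬝ᵥ u) := by
    have := congrArg (fun w => u ⬝ᵥ w) hk
    rw [e1, e2, e3] at this
    exact this
  have hN : k₀ ⬝ᵥ ((A⁻¹ * Jmat) *ᵥ k₀) = lam * (k₀ ⬝ᵥ (A⁻¹ *ᵥ k₀)) := by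
    calc k₀ ⬝ᵥ ((A⁻¹ * Jmat) *ᵥ k₀) = k₀ ⬝ᵥ (A⁻¹ *ᵥ (Jmat *ᵥ k₀)) := by
          rw [Matrix.mulVec_mulVec]
      _ = (A⁻¹ *ᵥ k₀) ⬝ᵥ (Jmat *ᵥ k₀) := by
          rw [Matrix.dotProduct_mulVec, ← Matrix.mulVec_transpose, hAinvT]
      _ = -(k₀ ⬝ᵥ (Jmat *ᵥ u)) := Jskew u k₀
      _ = lam * (k₀ ⬝ᵥ u) := hlamD
  have hD : 0 < k₀ ⬝ᵥ (A⁻¹ *ᵥ k₀) := by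
    have h := hApd.inv.dotProduct_mulVec_pos hk0
    simpa using h
  -- exp along the eigenvector
  have heig : ∀ t : ℝ, NormedSpace.exp ((-t) • (Smat A)ᵀ) *ᵥ k₀
      = Real.exp (-t * lam) • k₀ := by
    intro t
    have he : ((-t) • (Smat A)ᵀ) *ᵥ k₀ = (-t * lam) • k₀ := by
      rw [Matrix.smul_mulVec, hk, smul_smul]
    exact exp_mulVec_eig _ _ _ he
  -- the symbol is constant 2*lam along the flow
  have hmconst : ∀ r : ℝ, symb A (NormedSpace.exp ((-r) • (Smat A)ᵀ) *ᵥ k₀) = 2 * lam := by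
    intro r
    rw [heig r]
    set c := Real.exp (-r * lam) with hcdef
    have hc : c ≠ 0 := (Real.exp_pos _).ne'
    set N := k₀ ⬝ᵥ ((A⁻¹ * Jmat) *ᵥ k₀) with hNdef
    set D := k₀ ⬝ᵥ (A⁻¹ *ᵥ k₀) with hDdef
    have hDne : D ≠ 0 := hD.ne'
    have hexp : symb A (c • k₀) = 2 * (c * (c * N)) / (c * (c * D)) := by
      simp only [symb, Matrix.mulVec_smul, smul_dotProduct, dotProduct_smul,
        smul_eq_mul, hNdef, hDdef]
    rw [hexp, hN]
    field_simp
  have hsymbM : ∀ t : ℝ, symbM A t k₀ = Real.exp (2 * lam * t) := by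
    intro t
    unfold symbM
    congr 1
    simp only [hmconst]
    rw [intervalIntegral.integral_const]
    simp only [sub_zero, smul_eq_mul]
    ring
  have heq : ∀ t : ℝ,
      |a₀ * symbM A t k₀| * eunorm (NormedSpace.exp ((-t) • (Smat A)ᵀ) *ᵥ k₀) =
        |a₀| * eunorm k₀ * Real.exp (lam * t) := by
    intro t
    rw [hsymbM t, heig t, eunorm_smul, abs_mul, Real.abs_exp, Real.abs_exp]
    have h2 : Real.exp (2 * lam * t) * Real.exp (-t * lam) = Real.exp (lam * t) := by
      rw [← Real.exp_add]; congr 1; ring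
    linear_combination (|a₀| * eunorm k₀) * h2
  refine ⟨heq, ?_⟩
  have hC : 0 < |a₀| * eunorm k₀ := mul_pos (abs_pos.2 ha₀) (eunorm_pos hk0)
  have h1 : Tendsto (fun t : ℝ => |a₀| * eunorm k₀ * Real.exp (lam * t)) atTop atTop := by
    apply Tendsto.const_mul_atTop hC
    exact Real.tendsto_exp_atTop.comp (Tendsto.const_mul_atTop hlampos tendsto_id)
  exact Tendsto.congr (fun t => (heq t).symm) h1
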